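/- Let ℓ = x_N be a variable of ℂ[x_1,…,x_N] and let P be a homogeneous polynomial of degree m in the remaining variables x_1,…,x_{N−1}. Let n > m and set F = ℓ^{n−m}·P. Then for every k < n−m, every k-th order partial derivative of F is divisible by ℓ^{n−m−k}; consequently, for every τ ≥ 0, dim I^{F,k}_{n−k+τ} ≤ C(N+m+τ−1, m+τ). -/

import Mathlib

/-- Iterated partial derivative with respect to a list of variables. -/
noncomputable def pderivList {σ : Type*} (L : List σ) (P : MvPolynomial σ ℂ) :
    MvPolynomial σ ℂ :=
  L.foldr (fun i q => MvPolynomial.pderiv i q) P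

/-- The span of all `M · ∂^k P/∂x^β` with `M` a monomial of degree `τ` and `|β| = k`, i.e.
the degree-`(deg P - k + τ)` graded component of the `k`-th Jacobian ideal of `P`. -/
noncomputable def shiftedPartialsSpan {σ : Type*} (P : MvPolynomial σ ℂ) (k τ : ℕ) :
    Submodule ℂ (MvPolynomial σ ℂ) :=
  Submodule.span ℂ
    { q | ∃ (L : List σ) (M : σ →₀ ℕ), L.length = k ∧ (M.sum fun _ e => e) = τ ∧
        q = MvPolynomial.monomial M (1 : ℂ) * pderivList L P }

open MvPolynomial

lemma finsupp_sum_eq_degree {σ : Type*} (M : σ →₀ ℕ) :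
    (M.sum fun _ e => e) = M.degree := rfl

lemma isHomogeneous_pderiv {σ : Type*} {P : MvPolynomial σ ℂ} {d : ℕ}
    (h : P.IsHomogeneous d) (i : σ) : (MvPolynomial.pderiv i P).IsHomogeneous (d - 1) := by
  classical
  rw [P.as_sum, map_sum]
  refine MvPolynomial.IsHomogeneous.sum _ _ _ (fun s hs => ?_)
  rw [MvPolynomial.pderiv_monomial]
  by_cases h0 : s i = 0
  · simp [h0, MvPolynomial.isHomogeneous_zero]
  · apply MvPolynomial.isHomogeneous_monomial
    have h1 : Finsupp.single i 1 ≤ s := by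
      rw [Finsupp.single_le_iff]; omega
    have h2 : (s - Finsupp.single i 1) + Finsupp.single i 1 = s := tsub_add_cancel_of_le h1
    have h3 : (s - Finsupp.single i 1).degree + (Finsupp.single i 1).degree = d := by
      simp only [Finsupp.degree_eq_weight_one]
      rw [← map_add, h2]
      exact h (MvPolynomial.mem_support_iff.mp hs)
    have h4 : (Finsupp.single i 1).degree = 1 := by
      rw [Finsupp.degree_apply, Finsupp.support_single_ne_zero _ one_ne_zero, Finset.sum_singleton]
      exact Finsupp.single_eq_same
    omega

lemma mul_X_pderiv_isHomogeneous {σ : Type*} (l i : σ) {Q : MvPolynomial σ ℂ} {d : ℕ}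
    (hQ : Q.IsHomogeneous d) :
    (MvPolynomial.X l * MvPolynomial.pderiv i Q).IsHomogeneous d := by
  classical
  cases d with
  | zero =>
    have h0 : Q.totalDegree = 0 := (MvPolynomial.totalDegree_zero_iff_isHomogeneous _).mpr hQ
    have hp : MvPolynomial.pderiv i Q = 0 := by
      rw [Q.as_sum, map_sum]
      refine Finset.sum_eq_zero (fun s hs => ?_)
      rw [MvPolynomial.pderiv_monomial]
      have hsi := (MvPolynomial.totalDegree_eq_zero_iff _ Q).mp h0 s hs i
      simp [hsi]
    rw [hp, mul_zero]
    exact MvPolynomial.isHomogeneous_zero _ _ _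
  | succ d' =>
    have := (isHomogeneous_X ℂ l).mul (isHomogeneous_pderiv hQ i)
    simpa [Nat.add_comm] using this

/-- one derivative step -/
lemma pderiv_pow_mul_step {σ : Type*} (l i : σ) (e : ℕ) (he : 1 ≤ e)
    {Q : MvPolynomial σ ℂ} {d : ℕ} (hQ : Q.IsHomogeneous d) :
    ∃ G : MvPolynomial σ ℂ, G.IsHomogeneous d ∧
      MvPolynomial.pderiv i (MvPolynomial.X l ^ e * Q) =
        MvPolynomial.X l ^ (e - 1) * G := by
  classical
  refine ⟨MvPolynomial.C (if i = l then (e : ℂ) else 0) * Q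
      + MvPolynomial.X l * MvPolynomial.pderiv i Q, ?_, ?_⟩
  · exact (hQ.C_mul _).add (mul_X_pderiv_isHomogeneous l i hQ)
  · rw [MvPolynomial.pderiv_mul, MvPolynomial.pderiv_pow, MvPolynomial.pderiv_X]
    have hXe : MvPolynomial.X (R := ℂ) l ^ e = MvPolynomial.X l ^ (e - 1) * MvPolynomial.X l := by
      rw [← pow_succ]
      congr 1
      omega
    by_cases hil : i = l
    · subst hil
      simp only [Pi.single_eq_same, eq_self_iff_true, if_true, mul_one]
      rw [hXe, MvPolynomial.C_eq_coe_nat]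
      ring
    · simp only [Pi.single_eq_of_ne (Ne.symm hil), if_neg hil, map_zero, zero_mul, mul_zero,
        zero_add]
      rw [hXe]
      ring

lemma pderivList_pow_mul {σ : Type*} (l : σ) {Q : MvPolynomial σ ℂ} {d : ℕ}
    (hQ : Q.IsHomogeneous d) :
    ∀ (L : List σ) (e : ℕ), L.length ≤ e →
      ∃ G : MvPolynomial σ ℂ, G.IsHomogeneous d ∧
        pderivList L (MvPolynomial.X l ^ e * Q) =
          MvPolynomial.X l ^ (e - L.length) * G := by
  intro L
  induction L with
  | nil =>
    intro e he
    exact ⟨Q, hQ, by simp [pderivList]⟩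
  | cons i L ih =>
    intro e he
    have hL : L.length ≤ e := by simp at he; omega
    obtain ⟨G, hG, hEq⟩ := ih e hL
    have h1 : 1 ≤ e - L.length := by simp at he; omega
    obtain ⟨G', hG', hEq'⟩ := pderiv_pow_mul_step l i (e - L.length) h1 hG
    refine ⟨G', hG', ?_⟩
    have hfold : pderivList (i :: L) (MvPolynomial.X l ^ e * Q) =
        MvPolynomial.pderiv i (pderivList L (MvPolynomial.X l ^ e * Q)) := rfl
    have hlen : e - (i :: L).length = e - L.length - 1 := by
      simp only [List.length_cons]; omega
    rw [hfold, hEq, hEq', hlen]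

/-- homogeneous polynomials lie in the span of their monomials, multiplied by a fixed factor -/
lemma mul_homogeneous_mem_span {σ : Type*} [Fintype σ] [DecidableEq σ] (c : MvPolynomial σ ℂ)
    {H : MvPolynomial σ ℂ} {D : ℕ} (hH : H.IsHomogeneous D) :
    c * H ∈ Submodule.span ℂ
      ((Finset.univ.image (fun s : Sym σ D =>
        c * MvPolynomial.monomial (Multiset.toFinsupp (s : Multiset σ)) (1 : ℂ)) : Finset _) :
        Set (MvPolynomial σ ℂ)) := by
  classical
  have hsum : c * H = ∑ v ∈ H.support, MvPolynomial.coeff v H •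
      (c * MvPolynomial.monomial v (1 : ℂ)) := by
    conv_lhs => rw [H.as_sum]
    rw [Finset.mul_sum]
    refine Finset.sum_congr rfl (fun v _ => ?_)
    rw [← mul_smul_comm, MvPolynomial.smul_monomial, smul_eq_mul, mul_one]
  rw [hsum]
  refine Submodule.sum_mem _ (fun v hv => ?_)
  have hdeg : v.degree = D := by
    rw [Finsupp.degree_eq_weight_one]
    exact hH (MvPolynomial.mem_support_iff.mp hv)
  have hcard : Multiset.card (Finsupp.toMultiset v) = D := by
    rw [Finsupp.card_toMultiset]
    rw [← hdeg]
    rfl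
  refine Submodule.smul_mem _ _ (Submodule.subset_span ?_)
  refine Finset.mem_coe.mpr (Finset.mem_image.mpr ⟨⟨Finsupp.toMultiset v, hcard⟩,
    Finset.mem_univ _, ?_⟩)
  simp [Finsupp.toMultiset_toFinsupp]

set_option maxHeartbeats 1000000 in
theorem padded_jacobian_bound (N m n : ℕ) (hmn : m < n)
    (P : MvPolynomial (Fin (N + 1)) ℂ) (hhom : P.IsHomogeneous m)
    (hvars : ∀ d ∈ P.support, d (Fin.last N) = 0) :
    ∀ k : ℕ, k < n - m →
      (∀ L : List (Fin (N + 1)), L.length = k →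
        ∃ G : MvPolynomial (Fin (N + 1)) ℂ,
          pderivList L (MvPolynomial.X (Fin.last N) ^ (n - m) * P) =
            MvPolynomial.X (Fin.last N) ^ (n - m - k) * G) ∧
      (∀ τ : ℕ,
        Module.finrank ℂ
            (shiftedPartialsSpan (MvPolynomial.X (Fin.last N) ^ (n - m) * P) k τ) ≤
          Nat.choose (N + 1 + m + τ - 1) (m + τ)) := by
  intro k hk
  constructor
  · intro L hL
    obtain ⟨G, _, hEq⟩ := pderivList_pow_mul (Fin.last N) hhom L (n - m) (by omega)
    exact ⟨G, by rwa [hL] at hEq⟩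
  · intro τ
    classical
    set l := Fin.last N with hl
    set e := n - m with he
    set c : MvPolynomial (Fin (N + 1)) ℂ := MvPolynomial.X l ^ (e - k) with hc
    set s : Finset (MvPolynomial (Fin (N + 1)) ℂ) :=
      Finset.univ.image (fun sy : Sym (Fin (N + 1)) (τ + m) =>
        c * MvPolynomial.monomial (Multiset.toFinsupp (sy : Multiset (Fin (N + 1)))) (1 : ℂ))
      with hs
    have hle : shiftedPartialsSpan (MvPolynomial.X l ^ e * P) k τ ≤
        Submodule.span ℂ (s : Set (MvPolynomial (Fin (N + 1)) ℂ)) := by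
      rw [shiftedPartialsSpan, Submodule.span_le]
      rintro q ⟨L, M, hLk, hM, rfl⟩
      obtain ⟨G, hG, hEq⟩ := pderivList_pow_mul l hhom L e (by omega)
      rw [hEq, hLk]
      have hMhom : (MvPolynomial.monomial M (1 : ℂ)).IsHomogeneous τ :=
        MvPolynomial.isHomogeneous_monomial _ (by rw [← finsupp_sum_eq_degree]; exact hM)
      have hqhom : (MvPolynomial.monomial M (1 : ℂ) * G).IsHomogeneous (τ + m) := hMhom.mul hG
      have hre : MvPolynomial.monomial M (1 : ℂ) * (MvPolynomial.X l ^ (e - k) * G) =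
          c * (MvPolynomial.monomial M (1 : ℂ) * G) := by rw [hc]; ring
      rw [hre]
      exact mul_homogeneous_mem_span c hqhom
    have h1 : Module.finrank ℂ (shiftedPartialsSpan (MvPolynomial.X l ^ e * P) k τ) ≤
        Module.finrank ℂ (Submodule.span ℂ (s : Set (MvPolynomial (Fin (N + 1)) ℂ))) :=
      Submodule.finrank_mono hle
    have h2 : Module.finrank ℂ (Submodule.span ℂ (s : Set (MvPolynomial (Fin (N + 1)) ℂ))) ≤
        s.card := finrank_span_finset_le_card s
    have h3 : s.card ≤ Fintype.card (Sym (Fin (N + 1)) (τ + m)) :=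
      Finset.card_image_le.trans (by simp)
    have h4 : Fintype.card (Sym (Fin (N + 1)) (τ + m)) =
        (Fintype.card (Fin (N + 1)) + (τ + m) - 1).choose (τ + m) :=
      Sym.card_sym_eq_choose (τ + m)
    have h5 : (Fintype.card (Fin (N + 1)) + (τ + m) - 1).choose (τ + m) =
        (N + 1 + m + τ - 1).choose (m + τ) := by
      rw [Fintype.card_fin, Nat.add_comm τ m]
      congr 1
      omega
    omega
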